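/- Let J be a nonempty poset ideal in Hom(P,[n]). Then every face G of Δ(J) of cardinality |P|·(n−1) − 1 (i.e., every codimension one face) is contained in at most two facets of Δ(J). -/
import Mathlib


variable {P : Type*} [PartialOrder P] [Fintype P] [DecidableEq P]

/-- The graph `Γφ = {(p, φ p) | p ∈ P}` of a map φ : P → [n], as a finite set. -/
def GammaF {n : ℕ} (φ : P → Fin n) : Finset (P × Fin n) :=
  Finset.univ.image fun p => (p, φ p)

/-- F is a face of Δ(J) iff F misses the graph Γφ of some φ ∈ J. -/
def IsFace {n : ℕ} (J : Set (P → Fin n)) (F : Finset (P × Fin n)) : Prop :=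
  ∃ φ ∈ J, ∀ p : P, (p, φ p) ∉ F

/-- A facet of Δ(J) is a face maximal under inclusion. -/
def IsFacet {n : ℕ} (J : Set (P → Fin n)) (F : Finset (P × Fin n)) : Prop :=
  IsFace J F ∧ ∀ G : Finset (P × Fin n), IsFace J G → F ⊆ G → F = G

/-- Let J be a nonempty poset ideal in Hom(P,[n]).  Every face G of Δ(J) of cardinality
|P|·(n−1) − 1 (codimension one face) is contained in at most two facets of Δ(J). -/
lemma mem_GammaF {n : ℕ} {φ : P → Fin n} {x : P × Fin n} :
    x ∈ GammaF φ ↔ x.2 = φ x.1 := by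
  simp only [GammaF, Finset.mem_image, Finset.mem_univ, true_and]
  constructor
  · rintro ⟨p, hp⟩
    rw [← hp]
  · intro h
    exact ⟨x.1, by rw [← h]⟩

lemma facet_eq {n : ℕ} {J : Set (P → Fin n)} {F : Finset (P × Fin n)}
    (h : IsFacet J F) : ∃ φ ∈ J, F = (GammaF φ)ᶜ := by
  obtain ⟨⟨φ, hφJ, hφ⟩, hmax⟩ := h
  refine ⟨φ, hφJ, hmax _ ⟨φ, hφJ, fun p hp => ?_⟩ fun x hx => ?_⟩
  · rw [Finset.mem_compl] at hp
    exact hp (mem_GammaF.mpr rfl)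
  · rw [Finset.mem_compl, mem_GammaF]
    intro h2
    apply hφ x.1
    have : (x.1, φ x.1) = x := by
      rw [← h2]
    rwa [this]

lemma card_GammaF {n : ℕ} (φ : P → Fin n) : (GammaF φ).card = Fintype.card P := by
  rw [GammaF, Finset.card_image_of_injective _ (fun a b hab => (Prod.mk.injEq _ _ _ _ ▸ hab).1),
    Finset.card_univ]

theorem stmt14 [Nonempty P] {n : ℕ} (hn : 0 < n) (J : Set (P → Fin n))
    (hJ1 : ∀ φ ∈ J, Monotone φ)
    (hJ2 : ∀ φ ∈ J, ∀ ψ : P → Fin n, Monotone ψ → ψ ≤ φ → ψ ∈ J)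
    (hJne : J.Nonempty)
    (G : Finset (P × Fin n)) (hG : IsFace J G)
    (hcard : G.card = Fintype.card P * (n - 1) - 1) :
    ∀ F₁ F₂ F₃ : Finset (P × Fin n),
      IsFacet J F₁ → G ⊆ F₁ → IsFacet J F₂ → G ⊆ F₂ → IsFacet J F₃ → G ⊆ F₃ →
      F₁ = F₂ ∨ F₁ = F₃ ∨ F₂ = F₃ := by
  intro F₁ F₂ F₃ h1 hg1 h2 hg2 h3 hg3
  obtain ⟨φ₁, hφ₁J, e1⟩ := facet_eq h1
  obtain ⟨φ₂, hφ₂J, e2⟩ := facet_eq h2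
  obtain ⟨φ₃, hφ₃J, e3⟩ := facet_eq h3
  by_contra hcon
  push_neg at hcon
  obtain ⟨ne12, ne13, ne23⟩ := hcon
  have f12 : φ₁ ≠ φ₂ := fun h => ne12 (by rw [e1, e2, h])
  have f13 : φ₁ ≠ φ₃ := fun h => ne13 (by rw [e1, e3, h])
  have f23 : φ₂ ≠ φ₃ := fun h => ne23 (by rw [e2, e3, h])
  rcases Nat.lt_or_ge n 2 with hlt | hge
  · -- n = 1 : all maps equal
    have hn1 : n = 1 := by omega
    subst hn1
    exact f12 (funext fun p => Subsingleton.elim _ _)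
  -- main case
  set T : Finset (P × Fin n) := Gᶜ with hT
  have memT : ∀ φ : P → Fin n, ∀ F : Finset (P × Fin n), F = (GammaF φ)ᶜ → G ⊆ F →
      ∀ p : P, (p, φ p) ∈ T := by
    intro φ F hF hGF p
    rw [hT, Finset.mem_compl]
    intro hmem
    have := hGF hmem
    rw [hF, Finset.mem_compl] at this
    exact this (mem_GammaF.mpr rfl)
  have m1 := memT φ₁ F₁ e1 hg1
  have m2 := memT φ₂ F₂ e2 hg2
  have m3 := memT φ₃ F₃ e3 hg3
  -- T has card |P| + 1
  have hTcard : T.card = Fintype.card P + 1 := by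
    obtain ⟨k, rfl⟩ : ∃ k, n = k + 1 := ⟨n - 1, by omega⟩
    have hk : 1 ≤ k := by omega
    have hm : 1 ≤ Fintype.card P := Fintype.card_pos
    have hmk : 1 ≤ Fintype.card P * k := Nat.one_le_iff_ne_zero.mpr (by positivity)
    have htot : Fintype.card (P × Fin (k+1)) = Fintype.card P * k + Fintype.card P := by
      rw [Fintype.card_prod, Fintype.card_fin, Nat.mul_succ]
    rw [hT, Finset.card_compl, htot, hcard]
    simp only [Nat.add_sub_cancel]
    omega
  -- get two distinct bad pairs
  obtain ⟨r, hr⟩ := Function.ne_iff.mp f12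
  obtain ⟨s, hs⟩ := Function.ne_iff.mp f13
  have key : ∃ x y : P × Fin n, x ∈ T ∧ y ∈ T ∧ x ≠ y ∧ x.2 ≠ φ₁ x.1 ∧ y.2 ≠ φ₁ y.1 := by
    by_cases hcase : (r, φ₂ r) = (s, φ₃ s)
    · obtain ⟨t, ht⟩ := Function.ne_iff.mp f23
      have hrs : r = s := (Prod.mk.injEq _ _ _ _ ▸ hcase).1
      have heq23 : φ₂ r = φ₃ r := by
        have := (Prod.mk.injEq _ _ _ _ ▸ hcase).2
        rw [hrs]; rw [hrs] at this; exact this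
      have htr : t ≠ r := fun h => ht (h ▸ heq23)
      by_cases h2t : φ₂ t = φ₁ t
      · exact ⟨(r, φ₂ r), (t, φ₃ t), m2 r, m3 t, by simp [Ne, Prod.ext_iff, htr.symm],
          hr.symm, fun h => ht (h2t ▸ h.symm ▸ rfl)⟩
      · exact ⟨(r, φ₂ r), (t, φ₂ t), m2 r, m2 t, by simp [Ne, Prod.ext_iff, htr.symm],
          hr.symm, h2t⟩
    · exact ⟨(r, φ₂ r), (s, φ₃ s), m2 r, m3 s, hcase, hr.symm, hs.symm⟩
  obtain ⟨x, y, hxT, hyT, hxy, hx1, hy1⟩ := key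
  -- build a subset of T of card |P| + 2
  have hxΓ : x ∉ GammaF φ₁ := fun h => hx1 (mem_GammaF.mp h)
  have hyΓ : y ∉ GammaF φ₁ := fun h => hy1 (mem_GammaF.mp h)
  have hsub : insert x (insert y (GammaF φ₁)) ⊆ T := by
    intro z hz
    simp only [Finset.mem_insert] at hz
    rcases hz with rfl | rfl | hz
    · exact hxT
    · exact hyT
    · have := mem_GammaF.mp hz
      have hzeq : (z.1, φ₁ z.1) = z := by rw [← this]
      rw [← hzeq]
      exact m1 z.1
  have hcard2 : (insert x (insert y (GammaF φ₁))).card = Fintype.card P + 2 := by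
    rw [Finset.card_insert_of_notMem (by simp [hxy, hxΓ]),
      Finset.card_insert_of_notMem hyΓ, card_GammaF]
  have := Finset.card_le_card hsub
  rw [hcard2, hTcard] at this
  omega
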